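/- Let G be an RCGBAR with independent objectives. For every kind of preferences pref ∈ {ct, ca, pca}, a profile P is a Nash equilibrium (P ∈ NE^pref(G)) if and only if for every player i ∈ N: P_i equals the bag of singleton bundles consisting exactly of the atoms of γ_i when ♭(γ_i) ⊆ ♭•(ε_i), and P_i = ∅ otherwise. In particular such a game has exactly one Nash equilibrium for each kind of preferences. -/

import Mathlib

open scoped Classical

/-- A resource contribution game over atomic resource type `Res` with player set `ι`:
each player has a goal (a resource bundle, i.e. a multiset of atomic resources) and
an endowment (a resource bag, i.e. a multiset of resource bundles). -/
structure RCG (Res ι : Type*) where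
  goal : ι → Multiset Res
  endow : ι → Multiset (Multiset Res)

namespace RCG

variable {Res ι : Type*} [Fintype ι]

/-- A profile assigns to each player a bag (his contribution). -/
abbrev Profile (Res ι : Type*) := ι → Multiset (Multiset Res)

/-- Outcome of a profile: the multiset sum of all contributions. -/
def out (P : Profile Res ι) : Multiset (Multiset Res) := ∑ i, P i

/-- The bag `X` can be transformed into the bundle `B`: `♭(B) ⊆ ♭•(X)`. -/
def Trans (X : Multiset (Multiset Res)) (B : Multiset Res) : Prop := B ≤ X.sum

/-- Player `i` is potentially satisfied by profile `P`. -/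
def Psat (G : RCG Res ι) (P : Profile Res ι) (i : ι) : Prop :=
  Trans (out P) (G.goal i)

/-- The set of players potentially satisfied by `P`. -/
noncomputable def psatPlayers (G : RCG Res ι) (P : Profile Res ι) : Finset ι :=
  Finset.univ.filter fun i => Psat G P i

/-- The profile `P` is contentious. -/
def Contentious (G : RCG Res ι) (P : Profile Res ι) : Prop :=
  ¬ Trans (out P) (∑ j ∈ psatPlayers G P, G.goal j)

/-- Restriction of bundle `B` to the resource types occurring in `C`. -/
noncomputable def restr (B C : Multiset Res) : Multiset Res := B.filter (· ∈ C)

/-- The profile `P` is contentious for player `i`. -/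
def ContentiousFor (G : RCG Res ι) (P : Profile Res ι) (i : ι) : Prop :=
  Psat G P i ∧ ¬ Trans (out P) (∑ j ∈ psatPlayers G P, restr (G.goal j) (G.goal i))

/-- The three kinds of preferences: contention-tolerant, (public) contention-averse,
private contention-averse. -/
inductive Pref | ct | ca | pca

/-- `P` is a good profile for player `i` according to preference kind `pref`. -/
def Good (pref : Pref) (G : RCG Res ι) (P : Profile Res ι) (i : ι) : Prop :=
  match pref with
  | .ct => Psat G P i
  | .ca => Psat G P i ∧ ¬ Contentious G P
  | .pca => Psat G P i ∧ ¬ ContentiousFor G P i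

/-- Player `i` strictly prefers `P` over `Q` (i.e. `Q ≺^pref_i P`). -/
def Prefers (pref : Pref) (G : RCG Res ι) (i : ι) (Q P : Profile Res ι) : Prop :=
  (¬ Good pref G P i ∧ ¬ Good pref G Q i ∧ P i < Q i) ∨
  (Good pref G P i ∧ ¬ Good pref G Q i) ∨
  (Good pref G P i ∧ Good pref G Q i ∧ P i < Q i)

/-- `C` is a profitable deviation for player `i` from profile `P`. -/
noncomputable def ProfDev (pref : Pref) (G : RCG Res ι) (P : Profile Res ι) (i : ι)
    (C : Multiset (Multiset Res)) : Prop :=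
  C ≤ G.endow i ∧ Prefers pref G i P (Function.update P i C)

/-- `P` is a pure Nash equilibrium of `G` according to `pref`:
`P` is a profile of `G` and no player has a profitable deviation. -/
noncomputable def NE (pref : Pref) (G : RCG Res ι) (P : Profile Res ι) : Prop :=
  (∀ i, P i ≤ G.endow i) ∧ ∀ i C, ¬ ProfDev pref G P i C

/-- `G` is an RCG with endowments as bags of atomic resources. -/
def IsRCGBAR (G : RCG Res ι) : Prop :=
  ∀ i, ∀ B ∈ G.endow i, ∃ r : Res, B = {r}

/-- `G` has independent objectives. -/
def IndepObjectives (G : RCG Res ι) : Prop :=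
  ∀ i j : ι, i ≠ j → ∀ r : Res, r ∈ G.goal i → r ∉ G.goal j

end RCG

namespace RCGproof

open RCG Multiset

variable {Res ι : Type*} [Fintype ι]

lemma sing_rep {X : Multiset (Multiset Res)} (h : ∀ B ∈ X, ∃ r : Res, B = {r}) :
    X = X.sum.map (fun a => ({a} : Multiset Res)) := by
  induction X using Multiset.induction with
  | empty => simp
  | cons B X ih =>
    obtain ⟨r, rfl⟩ := h _ (Multiset.mem_cons_self _ _)
    rw [Multiset.sum_cons, Multiset.singleton_add, Multiset.map_cons]
    congr 1
    exact ih fun B hB => h B (Multiset.mem_cons_of_mem hB)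

lemma flat_sum {κ : Type*} (s : Finset κ) (f : κ → Multiset (Multiset Res)) :
    (∑ j ∈ s, f j).sum = ∑ j ∈ s, (f j).sum := by
  induction s using Finset.cons_induction with
  | empty => simp
  | cons a s ha ih => rw [Finset.sum_cons, Finset.sum_cons, Multiset.sum_add, ih]

lemma sum_mono {X Y : Multiset (Multiset Res)} (h : X ≤ Y) : X.sum ≤ Y.sum := by
  obtain ⟨Z, rfl⟩ := Multiset.le_iff_exists_add.mp h
  rw [Multiset.sum_add]
  exact le_add_right (le_refl _)

lemma out_update (P : Profile Res ι) (i : ι) (C : Multiset (Multiset Res)) :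
    out (Function.update P i C) = C + ∑ j ∈ Finset.univ \ {i}, P j :=
  Finset.sum_update_of_mem (Finset.mem_univ i) P C

lemma out_eq (P : Profile Res ι) (i : ι) :
    out P = P i + ∑ j ∈ Finset.univ \ {i}, P j := by
  have := out_update P i (P i)
  rwa [Function.update_eq_self] at this

lemma out_flat (P : Profile Res ι) : (out P).sum = ∑ j : ι, (P j).sum :=
  flat_sum Finset.univ P

lemma not_contentious (G : RCG Res ι) (hind : IndepObjectives G) (P : Profile Res ι) :
    ¬ Contentious G P := by
  intro hc
  apply hc
  show (∑ j ∈ psatPlayers G P, G.goal j) ≤ (out P).sum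
  rw [Multiset.le_iff_count]
  intro a
  rw [Multiset.count_sum']
  by_cases h : ∃ j ∈ psatPlayers G P, a ∈ G.goal j
  · obtain ⟨j0, hj0, ha⟩ := h
    rw [Finset.sum_eq_single_of_mem j0 hj0
      (fun j _ hne => Multiset.count_eq_zero.mpr (hind j0 j hne.symm a ha))]
    have hps : Psat G P j0 := (Finset.mem_filter.mp hj0).2
    exact Multiset.le_iff_count.mp hps a
  · push_neg at h
    rw [Finset.sum_eq_zero (fun j hj => Multiset.count_eq_zero.mpr (h j hj))]
    exact Nat.zero_le _

lemma not_contentiousFor (G : RCG Res ι) (hind : IndepObjectives G)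
    (P : Profile Res ι) (i : ι) : ¬ ContentiousFor G P i := by
  rintro ⟨h1, h2⟩
  apply h2
  show (∑ j ∈ psatPlayers G P, restr (G.goal j) (G.goal i)) ≤ (out P).sum
  have hi : i ∈ psatPlayers G P := Finset.mem_filter.mpr ⟨Finset.mem_univ i, h1⟩
  rw [Finset.sum_eq_single_of_mem i hi (fun j _ hne => ?_)]
  · rw [restr, Multiset.filter_eq_self.mpr (fun a ha => ha)]
    exact h1
  · rw [restr, Multiset.filter_eq_nil.mpr (fun a ha => hind j i hne a ha)]

lemma good_iff (G : RCG Res ι) (hind : IndepObjectives G) (pref : Pref)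
    (P : Profile Res ι) (i : ι) : Good pref G P i ↔ Psat G P i := by
  cases pref with
  | ct => exact Iff.rfl
  | ca => exact ⟨fun h => h.1, fun h => ⟨h, not_contentious G hind P⟩⟩
  | pca => exact ⟨fun h => h.1, fun h => ⟨h, not_contentiousFor G hind P i⟩⟩

lemma count_out (G : RCG Res ι) (hind : IndepObjectives G) (P : Profile Res ι) (i : ι)
    (hown : ∀ j, j ≠ i → ∀ r ∈ (P j).sum, r ∈ G.goal j)
    {r : Res} (hr : r ∈ G.goal i) :
    Multiset.count r (out P).sum = Multiset.count r (P i).sum := by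
  rw [out_flat, Multiset.count_sum']
  rw [Finset.sum_eq_single_of_mem i (Finset.mem_univ i) (fun j _ hne => ?_)]
  rw [Multiset.count_eq_zero]
  intro hmem
  exact hind i j hne.symm r hr (hown j hne r hmem)

lemma goal_le_psum (G : RCG Res ι) (hind : IndepObjectives G) (P : Profile Res ι) (i : ι)
    (hown : ∀ j, j ≠ i → ∀ r ∈ (P j).sum, r ∈ G.goal j)
    (hps : G.goal i ≤ (out P).sum) : G.goal i ≤ (P i).sum := by
  rw [Multiset.le_iff_count]
  intro a
  by_cases ha : a ∈ G.goal i
  · rw [← count_out G hind P i hown ha]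
    exact Multiset.le_iff_count.mp hps a
  · simp [Multiset.count_eq_zero.mpr ha]

lemma cover_le (G : RCG Res ι) (hbar : IsRCGBAR G) {i : ι}
    (hcov : G.goal i ≤ (G.endow i).sum) :
    (G.goal i).map (fun a => ({a} : Multiset Res)) ≤ G.endow i := by
  conv_rhs => rw [sing_rep (hbar i)]
  exact Multiset.map_le_map hcov

lemma ne_not_psat_zero {pref : Pref} {G : RCG Res ι} (hind : IndepObjectives G)
    {P : Profile Res ι} (h : NE pref G P) (i : ι) (hnp : ¬ Psat G P i) : P i = 0 := by
  by_contra h0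
  have hlt : (0 : Multiset (Multiset Res)) < P i :=
    lt_of_le_of_ne (Multiset.zero_le _) (Ne.symm h0)
  apply h.2 i 0
  refine ⟨Multiset.zero_le _, ?_⟩
  have hgP : ¬ Good pref G P i := fun hg => hnp ((good_iff G hind pref P i).mp hg)
  by_cases hg' : Good pref G (Function.update P i 0) i
  · exact Or.inr (Or.inl ⟨hg', hgP⟩)
  · refine Or.inl ⟨hg', hgP, ?_⟩
    simpa [Function.update_self] using hlt

lemma claimS {pref : Pref} {G : RCG Res ι} (hbar : IsRCGBAR G) (hind : IndepObjectives G)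
    {P : Profile Res ι} (h : NE pref G P) (j : ι) (hpsat : Psat G P j)
    {r : Res} (hr : r ∈ (P j).sum) :
    r ∈ G.goal j ∧ Multiset.count r (G.goal j) = Multiset.count r (out P).sum := by
  have hsings : ∀ B ∈ P j, ∃ s : Res, B = {s} :=
    fun B hB => hbar j B (Multiset.mem_of_le (h.1 j) hB)
  have hmem : ({r} : Multiset Res) ∈ P j := by
    rw [sing_rep hsings]
    exact Multiset.mem_map_of_mem _ hr
  set C := (P j).erase {r} with hC
  have hCP : C < P j := Multiset.erase_lt.mpr hmem
  have hCe : C ≤ G.endow j := le_trans hCP.le (h.1 j)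
  have hnpref : ¬ Prefers pref G j P (Function.update P j C) :=
    fun hp => h.2 j C ⟨hCe, hp⟩
  have hgood : Good pref G P j := (good_iff G hind pref P j).mpr hpsat
  have hng : ¬ Good pref G (Function.update P j C) j := by
    intro hg
    exact hnpref (Or.inr (Or.inr ⟨hg, hgood, by simpa [Function.update_self] using hCP⟩))
  have hnps : ¬ Psat G (Function.update P j C) j :=
    fun hp => hng ((good_iff G hind pref _ j).mpr hp)
  have hPj : P j = {r} ::ₘ C := (Multiset.cons_erase hmem).symm
  have hsum : (out P).sum = r ::ₘ (out (Function.update P j C)).sum := by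
    rw [out_eq P j, out_update, Multiset.sum_add, Multiset.sum_add, hPj,
      Multiset.sum_cons, add_assoc, Multiset.singleton_add]
  set T := (out (Function.update P j C)).sum with hT
  have hle : G.goal j ≤ r ::ₘ T := by rw [← hsum]; exact hpsat
  have hnle : ¬ G.goal j ≤ T := hnps
  obtain ⟨a, ha⟩ : ∃ a, Multiset.count a T < Multiset.count a (G.goal j) := by
    by_contra hco
    push_neg at hco
    exact hnle (Multiset.le_iff_count.mpr hco)
  have har : a = r := by
    by_contra hne
    have h1 := Multiset.le_iff_count.mp hle a
    rw [Multiset.count_cons_of_ne hne] at h1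
    omega
  subst har
  have h2 := Multiset.le_iff_count.mp hle a
  rw [Multiset.count_cons_self] at h2
  constructor
  · exact Multiset.count_pos.mp (by omega)
  · rw [hsum, Multiset.count_cons_self]
    omega

lemma ne_psat_shape {pref : Pref} {G : RCG Res ι} (hbar : IsRCGBAR G)
    (hind : IndepObjectives G) {P : Profile Res ι} (h : NE pref G P)
    (i : ι) (hpsat : Psat G P i) : (P i).sum = G.goal i := by
  have hown : ∀ j, j ≠ i → ∀ r ∈ (P j).sum, r ∈ G.goal j := by
    intro j _ r hr
    by_cases hpj : Psat G P j
    · exact (claimS hbar hind h j hpj hr).1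
    · rw [ne_not_psat_zero hind h j hpj] at hr
      simp at hr
  rw [Multiset.ext]
  intro a
  by_cases hma : a ∈ (P i).sum
  · obtain ⟨hag, hcnt⟩ := claimS hbar hind h i hpsat hma
    rw [count_out G hind P i hown hag] at hcnt
    exact hcnt.symm
  · rw [Multiset.count_eq_zero.mpr hma, eq_comm, Multiset.count_eq_zero]
    intro hag
    have h1 : G.goal i ≤ (P i).sum := goal_le_psum G hind P i hown hpsat
    exact hma (Multiset.mem_of_le h1 hag)

lemma ne_cov_psat {pref : Pref} {G : RCG Res ι} (hbar : IsRCGBAR G)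
    (hind : IndepObjectives G) {P : Profile Res ι} (h : NE pref G P)
    (i : ι) (hcov : G.goal i ≤ (G.endow i).sum) : Psat G P i := by
  by_contra hnp
  set C := (G.goal i).map (fun a => ({a} : Multiset Res)) with hCdef
  apply h.2 i C
  refine ⟨cover_le G hbar hcov, Or.inr (Or.inl ⟨?_,
    fun hg => hnp ((good_iff G hind pref P i).mp hg)⟩)⟩
  apply (good_iff G hind pref _ i).mpr
  show G.goal i ≤ (out (Function.update P i C)).sum
  rw [out_update, Multiset.sum_add, hCdef, Multiset.sum_map_singleton]
  exact le_add_right (le_refl _)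

end RCGproof


/-- in an RCGBAR with independent objectives, for every kind of
preferences, `P` is a Nash equilibrium iff each player contributes exactly the atoms
of his goal (as singleton bundles) when his endowment covers his goal, and nothing
otherwise; in particular there is exactly one Nash equilibrium. -/
theorem RCGBAR_indep_NE_characterization {Res ι : Type*} [Fintype ι]
    (G : RCG Res ι) (hbar : RCG.IsRCGBAR G) (hind : RCG.IndepObjectives G)
    (pref : RCG.Pref) :
    (∀ P : RCG.Profile Res ι,
      RCG.NE pref G P ↔
        ∀ i : ι,
          (G.goal i ≤ (G.endow i).sum →
            P i = (G.goal i).map (fun a => ({a} : Multiset Res))) ∧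
          (¬ G.goal i ≤ (G.endow i).sum → P i = 0)) ∧
    (∃! P : RCG.Profile Res ι, RCG.NE pref G P) := by
  classical
  have main : ∀ P : RCG.Profile Res ι,
      RCG.NE pref G P ↔
        ∀ i : ι,
          (G.goal i ≤ (G.endow i).sum →
            P i = (G.goal i).map (fun a => ({a} : Multiset Res))) ∧
          (¬ G.goal i ≤ (G.endow i).sum → P i = 0) := by
    intro P
    constructor
    · intro h i
      constructor
      · intro hcov
        have hps := RCGproof.ne_cov_psat hbar hind h i hcov
        have hsum := RCGproof.ne_psat_shape hbar hind h i hps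
        have hsings : ∀ B ∈ P i, ∃ r : Res, B = {r} :=
          fun B hB => hbar i B (Multiset.mem_of_le (h.1 i) hB)
        rw [RCGproof.sing_rep hsings, hsum]
      · intro hncov
        apply RCGproof.ne_not_psat_zero hind h i
        intro hps
        exact hncov (by
          rw [← RCGproof.ne_psat_shape hbar hind h i hps]
          exact RCGproof.sum_mono (h.1 i))
    · intro hspec
      have hown : ∀ j i, j ≠ i → ∀ r ∈ (P j).sum, r ∈ G.goal j := by
        intro j i _ r hr
        by_cases hcov : G.goal j ≤ (G.endow j).sum
        · rw [(hspec j).1 hcov, Multiset.sum_map_singleton] at hr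
          exact hr
        · rw [(hspec j).2 hcov] at hr
          simp at hr
      constructor
      · intro i
        by_cases hcov : G.goal i ≤ (G.endow i).sum
        · rw [(hspec i).1 hcov]; exact RCGproof.cover_le G hbar hcov
        · rw [(hspec i).2 hcov]; exact Multiset.zero_le _
      · rintro i C ⟨hCe, hpref⟩
        have hown' : ∀ j, j ≠ i → ∀ r ∈ ((Function.update P i C) j).sum, r ∈ G.goal j := by
          intro j hj
          rw [Function.update_of_ne hj]
          exact hown j i hj
        have key : RCG.Psat G (Function.update P i C) i → G.goal i ≤ C.sum := by
          intro hps
          have h1 := RCGproof.goal_le_psum G hind (Function.update P i C) i hown' hps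
          rwa [Function.update_self] at h1
        by_cases hcov : G.goal i ≤ (G.endow i).sum
        · have hPieq := (hspec i).1 hcov
          have hgood : RCG.Good pref G P i := by
            apply (RCGproof.good_iff G hind pref P i).mpr
            show G.goal i ≤ (RCG.out P).sum
            rw [RCGproof.out_eq P i, Multiset.sum_add, hPieq, Multiset.sum_map_singleton]
            exact le_add_right (le_refl _)
          rcases hpref with ⟨_, hng, _⟩ | ⟨_, hng⟩ | ⟨hg', _, hlt⟩
          · exact hng hgood
          · exact hng hgood
          · have hCle : G.goal i ≤ C.sum := key ((RCGproof.good_iff G hind pref _ i).mp hg')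
            rw [Function.update_self, hPieq] at hlt
            have hsings : ∀ B ∈ C, ∃ r : Res, B = {r} := by
              intro B hB
              obtain ⟨a, _, rfl⟩ := Multiset.mem_map.mp (Multiset.mem_of_le hlt.le hB)
              exact ⟨a, rfl⟩
            have hle2 : (G.goal i).map (fun a => ({a} : Multiset Res)) ≤ C := by
              calc (G.goal i).map (fun a => ({a} : Multiset Res))
                  ≤ (C.sum).map (fun a => ({a} : Multiset Res)) := Multiset.map_le_map hCle
                _ = C := (RCGproof.sing_rep hsings).symm
            exact absurd (lt_of_le_of_lt hle2 hlt) (lt_irrefl _)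
        · have hPieq := (hspec i).2 hcov
          have hnpsat : ¬ RCG.Psat G P i := by
            intro hps
            apply hcov
            have h1 : G.goal i ≤ (P i).sum :=
              RCGproof.goal_le_psum G hind P i (fun j hj => hown j i hj) hps
            rw [hPieq, Multiset.sum_zero, Multiset.le_zero] at h1
            rw [h1]
            exact Multiset.zero_le _
          have hngood : ¬ RCG.Good pref G P i :=
            fun hg => hnpsat ((RCGproof.good_iff G hind pref P i).mp hg)
          rcases hpref with ⟨_, _, hlt⟩ | ⟨hg', _⟩ | ⟨_, hg, _⟩
          · rw [Function.update_self, hPieq] at hlt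
            exact (Multiset.zero_le C).not_gt hlt
          · have h1 := key ((RCGproof.good_iff G hind pref _ i).mp hg')
            exact hcov (le_trans h1 (RCGproof.sum_mono hCe))
          · exact hngood hg
  refine ⟨main, ?_⟩
  refine ⟨fun i => if G.goal i ≤ (G.endow i).sum
      then (G.goal i).map (fun a => ({a} : Multiset Res)) else 0,
    (main _).mpr (fun i => ⟨fun h => if_pos h, fun h => if_neg h⟩),
    fun Q hQ => funext fun i => ?_⟩
  have hs := (main Q).mp hQ i
  by_cases hcov : G.goal i ≤ (G.endow i).sum
  · rw [hs.1 hcov, if_pos hcov]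
  · rw [hs.2 hcov, if_neg hcov]
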